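/- arXiv:2601.22079 — 2 statements merged into one kernel-verified Lean document; each statement's English description precedes it below -/
import Mathlib

section
/- For n rounds with payoff vectors in [0,h]^k, the Exponential Weights algorithm with learning rate ε = √((ln k)/n) has expected per-round regret at most 2h·√((ln k)/n); in particular its per-round regret vanishes as n → ∞. -/
private lemma ew_rpow_le (ε x : ℝ) (hε : 0 ≤ ε) (hx0 : 0 ≤ x) (hx1 : x ≤ 1) :
    (1 + ε) ^ x ≤ 1 + ε * x := by
  have hb : (0:ℝ) < 1 + ε := by linarith
  have h1 := convexOn_exp.2 (Set.mem_univ (0:ℝ)) (Set.mem_univ (Real.log (1+ε)))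
    (by linarith : (0:ℝ) ≤ 1 - x) hx0 (by ring)
  simp only [smul_eq_mul, mul_zero, zero_add, Real.exp_zero, Real.exp_log hb] at h1
  rw [Real.rpow_def_of_pos hb]
  calc Real.exp (Real.log (1+ε) * x) = Real.exp (x * Real.log (1+ε)) := by rw [mul_comm]
    _ ≤ (1-x)*1 + x*(1+ε) := h1
    _ = 1 + ε * x := by ring

private lemma ew_log_lb (ε : ℝ) (hε : 0 ≤ ε) : ε - ε^2 ≤ Real.log (1+ε) := by
  have hb : (0:ℝ) < 1 + ε := by linarith
  have h1 := Real.log_le_sub_one_of_pos (inv_pos.mpr hb)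
  rw [Real.log_inv] at h1
  have h3 : (1+ε) * (1+ε)⁻¹ = 1 := mul_inv_cancel₀ (ne_of_gt hb)
  nlinarith [h1, h3, inv_nonneg.mpr hb.le]

private lemma ew_filter_succ {n : ℕ} (f : Fin n → ℝ) (m : ℕ) (hm : m < n) :
    ∑ i ∈ Finset.univ.filter (fun i : Fin n => i.val < m + 1), f i
      = (∑ i ∈ Finset.univ.filter (fun i : Fin n => i.val < m), f i) + f ⟨m, hm⟩ := by
  have he : Finset.univ.filter (fun i : Fin n => i.val < m + 1)
      = insert ⟨m, hm⟩ (Finset.univ.filter (fun i : Fin n => i.val < m)) := by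
    ext i
    simp [Nat.lt_succ_iff_lt_or_eq, Fin.ext_iff, or_comm]
    omega
  rw [he, Finset.sum_insert (by simp)]
  ring

private lemma ew_filter_all {n : ℕ} (f : Fin n → ℝ) :
    ∑ i ∈ Finset.univ.filter (fun i : Fin n => i.val < n), f i = ∑ i, f i := by
  congr 1
  apply Finset.filter_true_of_mem
  intro i _
  exact i.isLt

/-- Exponential Weights with learning rate `ε = √((ln k)/n)` has expected
per-round regret at most `2h·√((ln k)/n)` on every payoff sequence in `[0,h]^k`. -/
theorem exponential_weights_vanishing_regret
    (k n : ℕ) (hk : 0 < k) (hn : 0 < n) (h : ℝ) (hh : 0 < h)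
    (ε : ℝ) (hεdef : ε = Real.sqrt (Real.log k / n))
    (u : Fin n → Fin k → ℝ) (hu : ∀ i a, u i a ∈ Set.Icc (0 : ℝ) h) :
    ((Finset.univ.sup' (Finset.univ_nonempty_iff.mpr ⟨⟨0, hk⟩⟩)
          fun a : Fin k => ∑ i : Fin n, u i a)
        - ∑ i : Fin n, ∑ a : Fin k,
            ((1 + ε) ^ ((∑ i' ∈ Finset.univ.filter (fun i' : Fin n => i'.val < i.val), u i' a) / h)
                / ∑ j : Fin k,
                    (1 + ε) ^ ((∑ i' ∈ Finset.univ.filter (fun i' : Fin n => i'.val < i.val), u i' j) / h))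
              * u i a) / n
      ≤ 2 * h * Real.sqrt (Real.log k / n) := by
  have hε0 : 0 ≤ ε := hεdef ▸ Real.sqrt_nonneg _
  have hb : (0:ℝ) < 1 + ε := by linarith
  have hn' : (0:ℝ) < n := by exact_mod_cast hn
  rcases Nat.lt_or_ge k 2 with hk1 | hk2
  · -- k = 1
    have hk1' : k = 1 := by omega
    subst hk1'
    have hε : ε = 0 := by simp [hεdef]
    subst hε
    simp only [Nat.cast_one, Real.log_one, zero_div, Real.sqrt_zero, mul_zero]
    have hsum : ∀ i : Fin n, ∑ a : Fin 1,
        ((1 + (0:ℝ)) ^ ((∑ i' ∈ Finset.univ.filter (fun i' : Fin n => i'.val < i.val), u i' a) / h)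
          / ∑ j : Fin 1,
            (1 + (0:ℝ)) ^ ((∑ i' ∈ Finset.univ.filter (fun i' : Fin n => i'.val < i.val), u i' j) / h))
          * u i a = u i 0 := by
      intro i
      simp [Real.one_rpow]
    rw [Finset.sum_congr rfl (fun i _ => hsum i)]
    have hsup : (Finset.univ.sup' (Finset.univ_nonempty_iff.mpr ⟨⟨0, Nat.one_pos⟩⟩)
        fun a : Fin 1 => ∑ i : Fin n, u i a) = ∑ i : Fin n, u i 0 := by
      apply le_antisymm
      · apply Finset.sup'_le
        intro a _
        rw [Subsingleton.elim a 0]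
      · exact Finset.le_sup' (fun a : Fin 1 => ∑ i : Fin n, u i a)
          (Finset.mem_univ (0 : Fin 1))
    rw [hsup]
    simp
  · -- main case: k ≥ 2
    have hlogk : 0 < Real.log k := Real.log_pos (by exact_mod_cast hk2)
    have hεpos : 0 < ε := hεdef ▸ Real.sqrt_pos.mpr (div_pos hlogk hn')
    have hε2 : ε ^ 2 = Real.log k / n := by
      rw [hεdef, Real.sq_sqrt (div_pos hlogk hn').le]
    set S : ℕ → Fin k → ℝ :=
      fun m a => ∑ i' ∈ Finset.univ.filter (fun i' : Fin n => i'.val < m), u i' a with hSdef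
    set w : ℕ → Fin k → ℝ := fun m a => (1 + ε) ^ (S m a / h) with hwdef
    set W : ℕ → ℝ := fun m => ∑ a, w m a with hWdef
    set ν : Fin n → ℝ := fun i => ∑ a, (w i.val a / W i.val) * u i a with hνdef
    have hwpos : ∀ m a, 0 < w m a := fun m a => Real.rpow_pos_of_pos hb _
    have hWpos : ∀ m, 0 < W m := fun m =>
      Finset.sum_pos (fun a _ => hwpos m a) (Finset.univ_nonempty_iff.mpr ⟨⟨0, hk⟩⟩)
    have hνnn : ∀ i, 0 ≤ ν i := by
      intro i
      apply Finset.sum_nonneg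
      intro a _
      exact mul_nonneg (div_nonneg (hwpos _ a).le (hWpos _).le) (hu i a).1
    -- step inequality
    have hstep : ∀ m (hm : m < n),
        Real.log (W (m+1)) ≤ Real.log (W m) + (ε/h) * ν ⟨m, hm⟩ := by
      intro m hm
      have hSsucc : ∀ a, S (m+1) a = S m a + u ⟨m, hm⟩ a := fun a =>
        ew_filter_succ (fun i => u i a) m hm
      have hWle : W (m+1) ≤ W m * (1 + (ε/h) * ν ⟨m, hm⟩) := by
        have hterm : ∀ a : Fin k, w (m+1) a ≤ w m a + (ε/h) * (w m a * u ⟨m, hm⟩ a) := by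
          intro a
          have hw1 : w (m+1) a = w m a * (1+ε) ^ (u ⟨m, hm⟩ a / h) := by
            simp only [hwdef]
            rw [hSsucc a, add_div, Real.rpow_add hb]
          rw [hw1]
          have hrle : (1+ε) ^ (u ⟨m, hm⟩ a / h) ≤ 1 + ε * (u ⟨m, hm⟩ a / h) :=
            ew_rpow_le ε _ hε0 (div_nonneg (hu _ a).1 hh.le)
              ((div_le_one hh).mpr (hu _ a).2)
          calc w m a * (1+ε) ^ (u ⟨m, hm⟩ a / h)
              ≤ w m a * (1 + ε * (u ⟨m, hm⟩ a / h)) :=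
                mul_le_mul_of_nonneg_left hrle (hwpos m a).le
            _ = w m a + (ε/h) * (w m a * u ⟨m, hm⟩ a) := by ring
        have hν' : ∑ a, w m a * u ⟨m, hm⟩ a = W m * ν ⟨m, hm⟩ := by
          rw [hνdef]
          rw [Finset.mul_sum]
          apply Finset.sum_congr rfl
          intro a _
          field_simp [(hWpos m).ne']
        calc W (m+1) ≤ ∑ a, (w m a + (ε/h) * (w m a * u ⟨m, hm⟩ a)) :=
              Finset.sum_le_sum (fun a _ => hterm a)
          _ = W m + (ε/h) * ∑ a, w m a * u ⟨m, hm⟩ a := by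
              rw [Finset.sum_add_distrib, ← Finset.mul_sum]
          _ = W m * (1 + (ε/h) * ν ⟨m, hm⟩) := by rw [hν']; ring
      have hx : 0 ≤ (ε/h) * ν ⟨m, hm⟩ :=
        mul_nonneg (div_nonneg hε0 hh.le) (hνnn _)
      calc Real.log (W (m+1)) ≤ Real.log (W m * (1 + (ε/h) * ν ⟨m, hm⟩)) :=
            Real.log_le_log (hWpos _) hWle
        _ = Real.log (W m) + Real.log (1 + (ε/h) * ν ⟨m, hm⟩) :=
            Real.log_mul (hWpos m).ne' (by linarith)
        _ ≤ Real.log (W m) + (ε/h) * ν ⟨m, hm⟩ := by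
            have := Real.log_le_sub_one_of_pos (show (0:ℝ) < 1 + (ε/h) * ν ⟨m, hm⟩ by linarith)
            linarith
    -- induction
    have hW0 : W 0 = k := by
      simp only [hWdef, hwdef, hSdef]
      simp
    have hind : ∀ m, m ≤ n → Real.log (W m) ≤ Real.log k
        + (ε/h) * ∑ i ∈ Finset.univ.filter (fun i : Fin n => i.val < m), ν i := by
      intro m
      induction m with
      | zero => intro _; simp [hW0]
      | succ p ih =>
        intro hpn
        have hp : p < n := hpn
        calc Real.log (W (p+1)) ≤ Real.log (W p) + (ε/h) * ν ⟨p, hp⟩ := hstep p hp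
          _ ≤ Real.log k + (ε/h) * (∑ i ∈ Finset.univ.filter (fun i : Fin n => i.val < p), ν i)
              + (ε/h) * ν ⟨p, hp⟩ := by linarith [ih hp.le]
          _ = Real.log k + (ε/h) * ∑ i ∈ Finset.univ.filter (fun i : Fin n => i.val < p+1), ν i := by
              rw [ew_filter_succ ν p hp]; ring
    have hfinal : Real.log (W n) ≤ Real.log k + (ε/h) * ∑ i, ν i := by
      have := hind n le_rfl
      rwa [ew_filter_all ν] at this
    -- lower bound on W n via the optimal action
    obtain ⟨astar, -, hastar⟩ := Finset.exists_mem_eq_sup'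
      (Finset.univ_nonempty_iff.mpr ⟨(⟨0, hk⟩ : Fin k)⟩) (fun a : Fin k => ∑ i : Fin n, u i a)
    set OPT : ℝ := Finset.univ.sup' (Finset.univ_nonempty_iff.mpr ⟨⟨0, hk⟩⟩)
      (fun a : Fin k => ∑ i : Fin n, u i a) with hOPTdef
    have hOPTeq : OPT = ∑ i : Fin n, u i astar := hastar
    have hOPTnn : 0 ≤ OPT := by
      rw [hOPTeq]; exact Finset.sum_nonneg (fun i _ => (hu i astar).1)
    have hOPTle : OPT ≤ n * h := by
      rw [hOPTeq]
      calc ∑ i : Fin n, u i astar ≤ ∑ i : Fin n, h :=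
            Finset.sum_le_sum (fun i _ => (hu i astar).2)
        _ = n * h := by simp [mul_comm]
    have hSn : S n astar = OPT := by
      rw [hOPTeq, hSdef]
      exact ew_filter_all (fun i => u i astar)
    have hWlb : (1+ε) ^ (OPT / h) ≤ W n := by
      rw [← hSn]
      exact Finset.single_le_sum (fun a _ => (hwpos n a).le) (Finset.mem_univ astar)
    have hloglb : (OPT / h) * Real.log (1+ε) ≤ Real.log (W n) := by
      rw [← Real.log_rpow hb]
      exact Real.log_le_log (Real.rpow_pos_of_pos hb _) hWlb
    -- combine
    set E : ℝ := ∑ i, ν i with hEdef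
    have hEnn : 0 ≤ E := Finset.sum_nonneg (fun i _ => hνnn i)
    have hchain : (OPT / h) * (ε - ε^2) ≤ Real.log k + (ε/h) * E := by
      have h1 : (OPT / h) * (ε - ε^2) ≤ (OPT / h) * Real.log (1+ε) :=
        mul_le_mul_of_nonneg_left (ew_log_lb ε hε0) (div_nonneg hOPTnn hh.le)
      linarith [hfinal]
    have hlogk_eq : Real.log k = ε^2 * n := by
      rw [hε2]; field_simp
    have hkey : ε * (OPT - E) ≤ 2 * ε^2 * n * h := by
      have h2 : OPT * (ε - ε^2) ≤ h * Real.log k + ε * E := by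
        have h2' := mul_le_mul_of_nonneg_right hchain hh.le
        have hO : OPT / h * (ε - ε^2) * h = OPT * (ε - ε^2) := by
          field_simp
        have hR : (Real.log k + ε/h * E) * h = h * Real.log k + ε * E := by
          field_simp
        rw [hO, hR] at h2'
        exact h2'
      nlinarith [hOPTle, hOPTnn, sq_nonneg ε, hlogk_eq, hh.le, hεpos.le]
    have hdiv : (OPT - E) / n ≤ 2 * h * ε := by
      rw [div_le_iff₀ hn']
      have h3 : ε * (OPT - E) ≤ ε * (2 * h * ε * n) := by
        calc ε * (OPT - E) ≤ 2 * ε^2 * n * h := hkey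
          _ = ε * (2 * h * ε * n) := by ring
      exact le_of_mul_le_mul_left h3 hεpos
    rw [← hεdef]
    exact hdiv
end

section
/- For any fixed sequence of payoff vectors u^1, …, u^n with entries in [0,h] and any ε ∈ (0,1), the Perturbed Be the Leader benchmark satisfies E[BTPL] ≥ OPT − (h/ε)·(1 + ln k), where OPT = max_a Σ_{i=1}^n u^i_a. -/
open MeasureTheory

/-- A fixed tie-breaking rule for maximization over `Fin k`: among the maximizers of `s`,
pick the one with the smallest index. -/
noncomputable def argmaxFin {k : ℕ} (hk : 0 < k) (s : Fin k → ℝ) : Fin k := by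
  classical
  exact (Finset.univ.filter fun a => ∀ b, s b ≤ s a).min' (by
    obtain ⟨a, -, ha⟩ :=
      Finset.exists_max_image (Finset.univ : Finset (Fin k)) s
        ⟨⟨0, hk⟩, Finset.mem_univ _⟩
    exact ⟨a, Finset.mem_filter.mpr ⟨Finset.mem_univ _, fun b => ha b (Finset.mem_univ b)⟩⟩)

lemma argmaxFin_le {k : ℕ} (hk : 0 < k) (s : Fin k → ℝ) (b : Fin k) :
    s b ≤ s (argmaxFin hk s) := by
  classical
  have h := Finset.min'_mem (Finset.univ.filter fun a => ∀ b, s b ≤ s a) (by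
    obtain ⟨a, -, ha⟩ :=
      Finset.exists_max_image (Finset.univ : Finset (Fin k)) s
        ⟨⟨0, hk⟩, Finset.mem_univ _⟩
    exact ⟨a, Finset.mem_filter.mpr ⟨Finset.mem_univ _, fun b => ha b (Finset.mem_univ b)⟩⟩)
  exact (Finset.mem_filter.mp h).2 b

lemma btl {k n : ℕ} (hk : 0 < k) (hne : (Finset.univ : Finset (Fin k)).Nonempty)
    (c : Fin k → ℝ) (u : Fin n → Fin k → ℝ) :
    ∀ m : ℕ, m ≤ n →
      (Finset.univ.sup' hne fun a =>
          c a + ∑ i' ∈ Finset.univ.filter (fun i' : Fin n => i'.val < m), u i' a)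
        - Finset.univ.sup' hne c
      ≤ ∑ i ∈ Finset.univ.filter (fun i : Fin n => i.val < m),
          u i (argmaxFin hk (fun a =>
            c a + ∑ i' ∈ Finset.univ.filter (fun i' : Fin n => i'.val ≤ i.val), u i' a)) := by
  intro m
  induction m with
  | zero =>
      intro _
      have he : (Finset.univ.filter (fun i' : Fin n => i'.val < 0)) = ∅ := by
        apply Finset.filter_false_of_mem; intro i _; omega
      simp [he]
  | succ m ih =>
      intro hm
      have hmn : m < n := hm
      set im : Fin n := ⟨m, hmn⟩ with him
      have hsplit : (Finset.univ.filter (fun i : Fin n => i.val < m + 1))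
          = insert im (Finset.univ.filter (fun i : Fin n => i.val < m)) := by
        ext i
        simp only [Finset.mem_filter, Finset.mem_insert, Finset.mem_univ, true_and]
        constructor
        · intro hi
          rcases Nat.lt_succ_iff_lt_or_eq.mp hi with h1 | h2
          · exact Or.inr h1
          · exact Or.inl (Fin.ext h2)
        · rintro (rfl | h1)
          · simp [him]
          · omega
      have hnotmem : im ∉ Finset.univ.filter (fun i : Fin n => i.val < m) := by
        simp [him]
      have hfilter_eq : (Finset.univ.filter (fun i' : Fin n => i'.val ≤ im.val))
          = Finset.univ.filter (fun i : Fin n => i.val < m + 1) := by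
        apply Finset.filter_congr; intro i _; simp [him, Nat.lt_succ_iff]
      set b : Fin k := argmaxFin hk (fun a =>
        c a + ∑ i' ∈ Finset.univ.filter (fun i : Fin n => i.val < m + 1), u i' a) with hb
      -- sup' F(m+1) ≤ F(m+1) b
      have hsup1 : (Finset.univ.sup' hne fun a =>
          c a + ∑ i' ∈ Finset.univ.filter (fun i : Fin n => i.val < m + 1), u i' a)
          ≤ c b + ∑ i' ∈ Finset.univ.filter (fun i : Fin n => i.val < m + 1), u i' b := by
        apply Finset.sup'_le
        intro a _
        exact argmaxFin_le hk (fun a =>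
          c a + ∑ i' ∈ Finset.univ.filter (fun i : Fin n => i.val < m + 1), u i' a) a
      have hFsplit : ∀ a : Fin k,
          ∑ i' ∈ Finset.univ.filter (fun i : Fin n => i.val < m + 1), u i' a
          = (∑ i' ∈ Finset.univ.filter (fun i : Fin n => i.val < m), u i' a) + u im a := by
        intro a
        rw [hsplit, Finset.sum_insert hnotmem]; ring
      have hsup2 : c b + ∑ i' ∈ Finset.univ.filter (fun i : Fin n => i.val < m), u i' b
          ≤ Finset.univ.sup' hne fun a =>
              c a + ∑ i' ∈ Finset.univ.filter (fun i : Fin n => i.val < m), u i' a :=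
        Finset.le_sup' (fun a =>
          c a + ∑ i' ∈ Finset.univ.filter (fun i : Fin n => i.val < m), u i' a)
          (Finset.mem_univ b)
      have ihm := ih (le_of_lt hm)
      have hbim : (argmaxFin hk fun a =>
          c a + ∑ i' ∈ Finset.univ.filter (fun i' : Fin n => i'.val ≤ im.val), u i' a) = b := by
        rw [hb]; congr 1; funext a; rw [hfilter_eq]
      have hsum : (∑ i ∈ Finset.univ.filter (fun i : Fin n => i.val < m + 1),
            u i (argmaxFin hk (fun a =>
              c a + ∑ i' ∈ Finset.univ.filter (fun i' : Fin n => i'.val ≤ i.val), u i' a)))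
          = (∑ i ∈ Finset.univ.filter (fun i : Fin n => i.val < m),
            u i (argmaxFin hk (fun a =>
              c a + ∑ i' ∈ Finset.univ.filter (fun i' : Fin n => i'.val ≤ i.val), u i' a)))
            + u im b := by
        rw [hsplit, Finset.sum_insert hnotmem, hbim]; ring
      have hFb := hFsplit b
      linarith [hsup1, hsup2, ihm, hFb, hsum]
lemma real_tail (k : ℕ) (hk : 0 < k) (ε : ℝ) (hε : 0 < ε) (hε1 : ε < 1) :
    (⌈Real.log k / ε⌉₊ : ℝ) + k * ((1 - ε) ^ (⌈Real.log k / ε⌉₊ + 1) * ε⁻¹)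
      ≤ (1 + Real.log k) / ε := by
  set L := ⌈Real.log k / ε⌉₊ with hLdef
  have hk1 : (1:ℝ) ≤ k := by exact_mod_cast hk
  have hk0 : (0:ℝ) < k := by linarith
  have hlog : 0 ≤ Real.log k := Real.log_nonneg hk1
  have hL1 : (L:ℝ) ≤ Real.log k / ε + 1 := (Nat.ceil_lt_add_one (by positivity)).le
  have hLge : Real.log k / ε ≤ (L:ℝ) := Nat.le_ceil _
  have hεL : Real.log k ≤ ε * L := by
    rw [div_le_iff₀ hε] at hLge; linarith
  have hexp : (1 - ε) ≤ Real.exp (-ε) := by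
    have := Real.add_one_le_exp (-ε); linarith
  have hpow : (1 - ε) ^ L ≤ Real.exp (-ε) ^ L :=
    pow_le_pow_left₀ (by linarith) hexp L
  have hexpL : Real.exp (-ε) ^ L = Real.exp (-(ε * L)) := by
    rw [← Real.exp_nat_mul]; congr 1; ring
  have hexp2 : Real.exp (-(ε * L)) ≤ Real.exp (-Real.log k) :=
    Real.exp_le_exp.mpr (by linarith)
  have hexp3 : Real.exp (-Real.log k) = (k:ℝ)⁻¹ := by
    rw [Real.exp_neg, Real.exp_log hk0]
  have hkL : (k:ℝ) * (1 - ε) ^ L ≤ 1 := by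
    have h1 : (1 - ε) ^ L ≤ (k:ℝ)⁻¹ := by
      rw [← hexp3]; calc (1-ε)^L ≤ Real.exp (-ε) ^ L := hpow
        _ = Real.exp (-(ε*L)) := hexpL
        _ ≤ _ := hexp2
    calc (k:ℝ) * (1-ε)^L ≤ (k:ℝ) * (k:ℝ)⁻¹ := by
          exact mul_le_mul_of_nonneg_left h1 hk0.le
      _ = 1 := mul_inv_cancel₀ hk0.ne'
  have h2 : (k:ℝ) * ((1 - ε) ^ (L + 1) * ε⁻¹) ≤ (1 - ε) * ε⁻¹ := by
    have heq : (k:ℝ) * ((1 - ε) ^ (L + 1) * ε⁻¹) = ((k:ℝ) * (1-ε)^L) * ((1-ε) * ε⁻¹) := by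
      rw [pow_succ]; ring
    rw [heq]
    have hnn : 0 ≤ (1-ε) * ε⁻¹ := mul_nonneg (by linarith) (by positivity)
    nlinarith [hkL, hnn]
  have h3 : (1 + Real.log k) / ε = Real.log k / ε + 1 + (1-ε) * ε⁻¹ := by
    field_simp; ring
  linarith

set_option maxHeartbeats 1000000 in
lemma geom_max_bound {Ω : Type*} [MeasurableSpace Ω] (μ : Measure Ω) [IsProbabilityMeasure μ]
    (k : ℕ) (hk : 0 < k) (ε : ℝ) (hε : 0 < ε) (hε1 : ε < 1)
    (Z : Fin k → Ω → ℕ) (hmeas : ∀ a, Measurable (Z a))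
    (hgeom : ∀ (a : Fin k) (ℓ : ℕ),
      μ {ω | ℓ ≤ Z a ω} = ENNReal.ofReal ((1 - ε) ^ ℓ)) :
    ∫⁻ ω, ((Finset.univ.sup fun a => Z a ω : ℕ) : ENNReal) ∂μ
      ≤ ENNReal.ofReal ((1 + Real.log k) / ε) := by
  classical
  set M : Ω → ℕ := fun ω => Finset.univ.sup fun a => Z a ω with hM
  have hvm : Measurable (fun ω a => Z a ω) := measurable_pi_lambda _ hmeas
  have hMm : Measurable M :=
    (measurable_of_countable (fun v : Fin k → ℕ => Finset.univ.sup v)).comp hvm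
  have hset : ∀ ℓ : ℕ, MeasurableSet {ω | ℓ < M ω} := fun ℓ => hMm trivial
  have hr0 : (0:ℝ) ≤ 1 - ε := by linarith
  have hr1 : (1:ℝ) - ε < 1 := by linarith
  -- pointwise layer-cake
  have step1 : ∀ ω, ((M ω : ℕ) : ENNReal)
      = ∑' ℓ : ℕ, Set.indicator {ω' | ℓ < M ω'} (fun _ => (1 : ENNReal)) ω := by
    intro ω
    rw [tsum_eq_sum (s := Finset.range (M ω)) (by
      intro ℓ hℓ
      have : ¬ ℓ < M ω := by simpa using hℓ
      simp [Set.indicator_apply, this])]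
    have hone : ∀ ℓ ∈ Finset.range (M ω),
        Set.indicator {ω' | ℓ < M ω'} (fun _ => (1 : ENNReal)) ω = 1 := by
      intro ℓ hℓ
      have : ℓ < M ω := Finset.mem_range.mp hℓ
      simp [Set.indicator_apply, this]
    rw [Finset.sum_congr rfl hone]
    simp
  have step2 : ∫⁻ ω, ((M ω : ℕ) : ENNReal) ∂μ = ∑' ℓ : ℕ, μ {ω | ℓ < M ω} := by
    rw [lintegral_congr step1,
      lintegral_tsum (f := fun ℓ => Set.indicator {ω' | ℓ < M ω'} (fun _ => (1 : ENNReal)))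
        (fun ℓ => ((measurable_const.indicator (hset ℓ)).aemeasurable))]
    exact tsum_congr fun ℓ => lintegral_indicator_one (hset ℓ)
  have hμle : ∀ ℓ : ℕ, μ {ω | ℓ < M ω} ≤ (k : ENNReal) * ENNReal.ofReal ((1-ε)^(ℓ+1)) := by
    intro ℓ
    have hsub : {ω | ℓ < M ω} ⊆ ⋃ a : Fin k, {ω | ℓ + 1 ≤ Z a ω} := by
      intro ω hω
      obtain ⟨a, -, ha⟩ := Finset.exists_mem_eq_sup (Finset.univ : Finset (Fin k))
        (Finset.univ_nonempty_iff.mpr ⟨⟨0, hk⟩⟩) (fun a => Z a ω)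
      have hM2 : M ω = Z a ω := ha
      exact Set.mem_iUnion.mpr ⟨a, by simp only [Set.mem_setOf_eq] at hω ⊢; omega⟩
    calc μ {ω | ℓ < M ω} ≤ μ (⋃ a : Fin k, {ω | ℓ + 1 ≤ Z a ω}) := measure_mono hsub
      _ ≤ ∑' a : Fin k, μ {ω | ℓ + 1 ≤ Z a ω} := measure_iUnion_le _
      _ = ∑' _a : Fin k, ENNReal.ofReal ((1-ε)^(ℓ+1)) := by
          exact tsum_congr fun a => hgeom a (ℓ+1)
      _ = (k : ENNReal) * ENNReal.ofReal ((1-ε)^(ℓ+1)) := by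
          rw [tsum_fintype, Finset.sum_const, Finset.card_univ, Fintype.card_fin,
            nsmul_eq_mul]
  set L := ⌈Real.log k / ε⌉₊ with hLdef
  have htail : ∑' j : ℕ, μ {ω | (j + L) < M ω}
      ≤ (k : ENNReal) * ENNReal.ofReal ((1-ε)^(L+1) * ε⁻¹) := by
    calc ∑' j : ℕ, μ {ω | (j + L) < M ω}
        ≤ ∑' j : ℕ, (k : ENNReal) * ENNReal.ofReal ((1-ε)^(j + L + 1)) :=
          ENNReal.tsum_le_tsum fun j => hμle (j + L)
      _ = (k : ENNReal) * ∑' j : ℕ, ENNReal.ofReal ((1-ε)^(L+1) * (1-ε)^j) := by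
          rw [ENNReal.tsum_mul_left]
          congr 1
          exact tsum_congr fun j => by rw [← pow_add]; ring_nf
      _ = (k : ENNReal) * ENNReal.ofReal ((1-ε)^(L+1) * ε⁻¹) := by
          congr 1
          rw [← ENNReal.ofReal_tsum_of_nonneg (fun j => by positivity)
            ((summable_geometric_of_lt_one hr0 hr1).mul_left _)]
          congr 1
          rw [tsum_mul_left, tsum_geometric_of_lt_one hr0 hr1]
          congr 1
          rw [show (1 : ℝ) - (1 - ε) = ε by ring]
  have hhead : ∑ ℓ ∈ Finset.range L, μ {ω | ℓ < M ω} ≤ (L : ENNReal) := by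
    calc ∑ ℓ ∈ Finset.range L, μ {ω | ℓ < M ω} ≤ ∑ _ℓ ∈ Finset.range L, 1 :=
          Finset.sum_le_sum fun ℓ _ => prob_le_one
      _ = (L : ENNReal) := by simp
  have hsplit : ∑' ℓ : ℕ, μ {ω | ℓ < M ω}
      = ∑ ℓ ∈ Finset.range L, μ {ω | ℓ < M ω} + ∑' j : ℕ, μ {ω | (j + L) < M ω} :=
    (Summable.sum_add_tsum_nat_add' (f := fun ℓ => μ {ω | ℓ < M ω}) (k := L) ENNReal.summable).symm
  rw [step2, hsplit]
  calc ∑ ℓ ∈ Finset.range L, μ {ω | ℓ < M ω} + ∑' j : ℕ, μ {ω | (j + L) < M ω}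
      ≤ (L : ENNReal) + (k : ENNReal) * ENNReal.ofReal ((1-ε)^(L+1) * ε⁻¹) :=
        add_le_add hhead htail
    _ = ENNReal.ofReal ((L : ℝ) + k * ((1-ε)^(L+1) * ε⁻¹)) := by
        have h1 : (0:ℝ) ≤ (1-ε)^(L+1) * ε⁻¹ := mul_nonneg (pow_nonneg hr0 _) (by positivity)
        rw [ENNReal.ofReal_add (Nat.cast_nonneg L) (mul_nonneg (Nat.cast_nonneg k) h1),
          ENNReal.ofReal_mul (Nat.cast_nonneg k), ENNReal.ofReal_natCast,
          ENNReal.ofReal_natCast]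
    _ ≤ ENNReal.ofReal ((1 + Real.log k) / ε) :=
        ENNReal.ofReal_le_ofReal (real_tail k hk ε hε hε1)

/-- Small perturbation: Perturbed Be the Leader — which in round `i` plays
`argmax_a (u⁰_a + U^i_a)` where `u⁰_a = h·Z_a` and the `Z_a` are independent geometric
random variables with parameter `ε ∈ (0,1)` (`P(Z_a ≥ ℓ) = (1-ε)^ℓ`) — satisfies
`E[BTPL] ≥ OPT - (h/ε)·(1 + ln k)` on every payoff sequence in `[0,h]^k`. -/
theorem btpl_small_perturbation
    (k n : ℕ) (hk : 0 < k) (h ε : ℝ) (hh : 0 < h) (hε : 0 < ε) (hε1 : ε < 1)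
    (u : Fin n → Fin k → ℝ) (hu : ∀ i a, u i a ∈ Set.Icc (0 : ℝ) h)
    {Ω : Type*} [MeasurableSpace Ω] (μ : Measure Ω) [IsProbabilityMeasure μ]
    (Z : Fin k → Ω → ℕ)
    (hmeas : ∀ a, Measurable (Z a))
    (hindep : ProbabilityTheory.iIndepFun Z μ)
    (hgeom : ∀ (a : Fin k) (ℓ : ℕ),
      μ {ω | ℓ ≤ Z a ω} = ENNReal.ofReal ((1 - ε) ^ ℓ)) :
    ∫ ω, (∑ i : Fin n,
        u i (argmaxFin hk (fun a =>
          h * (Z a ω : ℝ) +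
            ∑ i' ∈ Finset.univ.filter (fun i' : Fin n => i'.val ≤ i.val), u i' a))) ∂μ
      ≥ (Finset.univ.sup' (Finset.univ_nonempty_iff.mpr ⟨⟨0, hk⟩⟩)
            fun a : Fin k => ∑ i : Fin n, u i a)
        - (h / ε) * (1 + Real.log k) := by
  classical
  have hne : (Finset.univ : Finset (Fin k)).Nonempty := Finset.univ_nonempty_iff.mpr ⟨⟨0, hk⟩⟩
  set OPT : ℝ := Finset.univ.sup' (Finset.univ_nonempty_iff.mpr ⟨⟨0, hk⟩⟩)
    fun a : Fin k => ∑ i : Fin n, u i a with hOPT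
  set M : Ω → ℕ := fun ω => Finset.univ.sup fun a => Z a ω with hM
  set f : Ω → ℝ := fun ω => ∑ i : Fin n,
      u i (argmaxFin hk (fun a =>
        h * (Z a ω : ℝ) +
          ∑ i' ∈ Finset.univ.filter (fun i' : Fin n => i'.val ≤ i.val), u i' a)) with hf
  -- pointwise bound
  have hfiltn : (Finset.univ.filter (fun i : Fin n => i.val < n))
      = (Finset.univ : Finset (Fin n)) := by
    apply Finset.filter_true_of_mem; intro i _; exact i.isLt
  have hpoint : ∀ ω, OPT - h * (M ω : ℝ) ≤ f ω := by
    intro ω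
    have hb := btl hk hne (fun a => h * (Z a ω : ℝ)) u n le_rfl
    rw [hfiltn] at hb
    have h1 : OPT ≤ Finset.univ.sup' hne fun a =>
        h * (Z a ω : ℝ) + ∑ i' : Fin n, u i' a := by
      apply Finset.sup'_mono_fun
      intro a _
      have : (0:ℝ) ≤ h * (Z a ω : ℝ) := by positivity
      linarith
    have h2 : (Finset.univ.sup' hne fun a => h * (Z a ω : ℝ)) ≤ h * (M ω : ℝ) := by
      apply Finset.sup'_le
      intro a _
      have : (Z a ω : ℝ) ≤ (M ω : ℝ) :=
        Nat.cast_le.mpr (Finset.le_sup (f := fun a => Z a ω) (Finset.mem_univ a))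
      nlinarith
    calc OPT - h * (M ω : ℝ)
        ≤ (Finset.univ.sup' hne fun a => h * (Z a ω : ℝ) + ∑ i' : Fin n, u i' a)
          - Finset.univ.sup' hne (fun a => h * (Z a ω : ℝ)) := by linarith
      _ ≤ f ω := hb
  -- measurability
  have hvm : Measurable (fun ω a => Z a ω) := measurable_pi_lambda _ hmeas
  have hfm : Measurable f := by
    exact (measurable_of_countable (fun v : Fin k → ℕ => ∑ i : Fin n,
      u i (argmaxFin hk (fun a =>
        h * (v a : ℝ) +
          ∑ i' ∈ Finset.univ.filter (fun i' : Fin n => i'.val ≤ i.val), u i' a)))).comp hvm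
  have hMm : Measurable M :=
    (measurable_of_countable (fun v : Fin k → ℕ => Finset.univ.sup v)).comp hvm
  have hMrm : Measurable (fun ω => (M ω : ℝ)) :=
    (measurable_of_countable (fun m : ℕ => (m : ℝ))).comp hMm
  -- integrability of f
  have hfbound : ∀ ω, ‖f ω‖ ≤ (n : ℝ) * h := by
    intro ω
    have h0 : 0 ≤ f ω := Finset.sum_nonneg fun i _ => (hu i _).1
    have h1 : f ω ≤ (n : ℝ) * h := by
      calc f ω ≤ ∑ _i : Fin n, h := Finset.sum_le_sum fun i _ => (hu i _).2
        _ = (n : ℝ) * h := by simp [Finset.sum_const, nsmul_eq_mul]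
    rw [Real.norm_eq_abs, abs_of_nonneg h0]; exact h1
  have hfint : Integrable f μ :=
    Integrable.mono' (integrable_const ((n : ℝ) * h)) hfm.aestronglyMeasurable
      (ae_of_all _ hfbound)
  -- lintegral bound on M
  have hMlin : ∫⁻ ω, ((M ω : ℕ) : ENNReal) ∂μ ≤ ENNReal.ofReal ((1 + Real.log k) / ε) :=
    geom_max_bound μ k hk ε hε hε1 Z hmeas hgeom
  have hlogk : 0 ≤ Real.log k := Real.log_nonneg (by exact_mod_cast hk)
  have hBnn : 0 ≤ (1 + Real.log k) / ε := by positivity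
  -- integrability of M
  have hMint : Integrable (fun ω => (M ω : ℝ)) μ := by
    refine ⟨hMrm.aestronglyMeasurable, ?_⟩
    have heq : ∀ ω, ‖(M ω : ℝ)‖ₑ = ((M ω : ℕ) : ENNReal) := by
      intro ω
      rw [← ENNReal.ofReal_natCast, ← Real.enorm_eq_ofReal (Nat.cast_nonneg _)]
    show ∫⁻ ω, ‖(M ω : ℝ)‖ₑ ∂μ < ⊤
    rw [lintegral_congr heq]
    exact lt_of_le_of_lt hMlin ENNReal.ofReal_lt_top
  -- value of ∫ M
  have hMval : ∫ ω, (M ω : ℝ) ∂μ ≤ (1 + Real.log k) / ε := by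
    rw [integral_eq_lintegral_of_nonneg_ae (ae_of_all _ fun ω => Nat.cast_nonneg _)
      hMrm.aestronglyMeasurable]
    have heq : ∀ ω, ENNReal.ofReal ((M ω : ℝ)) = ((M ω : ℕ) : ENNReal) := fun ω =>
      ENNReal.ofReal_natCast _
    rw [lintegral_congr heq]
    calc (∫⁻ ω, ((M ω : ℕ) : ENNReal) ∂μ).toReal
        ≤ (ENNReal.ofReal ((1 + Real.log k) / ε)).toReal :=
          ENNReal.toReal_mono ENNReal.ofReal_ne_top hMlin
      _ = (1 + Real.log k) / ε := ENNReal.toReal_ofReal hBnn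
  -- assemble
  have hint2 : Integrable (fun ω => OPT - h * (M ω : ℝ)) μ :=
    (integrable_const OPT).sub (hMint.const_mul h)
  have hmono : ∫ ω, (OPT - h * (M ω : ℝ)) ∂μ ≤ ∫ ω, f ω ∂μ :=
    integral_mono hint2 hfint hpoint
  have hval : ∫ ω, (OPT - h * (M ω : ℝ)) ∂μ = OPT - h * ∫ ω, (M ω : ℝ) ∂μ := by
    rw [integral_sub (integrable_const OPT) (hMint.const_mul h), integral_const,
      probReal_univ, smul_eq_mul, one_mul, integral_const_mul]
  have hfinal : h * ∫ ω, (M ω : ℝ) ∂μ ≤ (h / ε) * (1 + Real.log k) := by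
    have := mul_le_mul_of_nonneg_left hMval hh.le
    calc h * ∫ ω, (M ω : ℝ) ∂μ ≤ h * ((1 + Real.log k) / ε) := this
      _ = (h / ε) * (1 + Real.log k) := by ring
  rw [ge_iff_le]
  calc OPT - (h / ε) * (1 + Real.log k)
      ≤ OPT - h * ∫ ω, (M ω : ℝ) ∂μ := by linarith
    _ = ∫ ω, (OPT - h * (M ω : ℝ)) ∂μ := hval.symm
    _ ≤ ∫ ω, f ω ∂μ := hmono
end
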